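/- In the polynomial ring 𝔽₅[t₁,…,t₉][x₁₂,x₁₃,x₁₄,x₁₅,x₂₃,x₂₄,x₂₅,x₃₄,x₃₅,x₄₅], let Q = t₁x₁₄² + t₂x₁₅² + t₃x₂₄x₄₅ + t₄x₂₅x₄₅ + t₅x₁₄x₁₅ + t₆x₁₂x₂₃ + t₇x₃₄x₄₅ + t₈x₃₅x₄₅ + t₉x₁₃x₂₃. At the point of 𝔽₅[t₁,…,t₉]¹⁰ with x₁₂ = t₉, x₁₃ = −t₆ and all other coordinates equal to 0: Q vanishes, all five Plücker quadrics q₁,…,q₅ vanish, and all ten partial derivatives ∂Q/∂x_{ij} vanish. (Hence this point of ℙ⁹ is a singular point of Gr(2,5) ∩ {Q = 0} over 𝔽₅(t₁,…,t₉).) -/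
import Mathlib


noncomputable section

open MvPolynomial

/-- The coefficient ring `𝔽₅[t₁,…,t₉]`. -/
abbrev R16 : Type := MvPolynomial (Fin 9) (ZMod 5)

/-- The parameter `tᵢ`, viewed as a constant in
`𝔽₅[t₁,…,t₉][x₁₂,x₁₃,x₁₄,x₁₅,x₂₃,x₂₄,x₂₅,x₃₄,x₃₅,x₄₅]`
(the ten Plücker variables are indexed `0,…,9` in the displayed order). -/
def T16 (i : Fin 9) : MvPolynomial (Fin 10) R16 := C (X i)

/-- `Q = t₁x₁₄² + t₂x₁₅² + t₃x₂₄x₄₅ + t₄x₂₅x₄₅ + t₅x₁₄x₁₅ + t₆x₁₂x₂₃ + t₇x₃₄x₄₅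
  + t₈x₃₅x₄₅ + t₉x₁₃x₂₃`. -/
def Q16 : MvPolynomial (Fin 10) R16 :=
  T16 0 * (X 2 * X 2) + T16 1 * (X 3 * X 3) + T16 2 * (X 5 * X 9) + T16 3 * (X 6 * X 9) +
  T16 4 * (X 2 * X 3) + T16 5 * (X 0 * X 4) + T16 6 * (X 7 * X 9) + T16 7 * (X 8 * X 9) +
  T16 8 * (X 1 * X 4)

/-- The five Plücker quadrics `q₁,…,q₅` in the variables
`x₁₂,x₁₃,x₁₄,x₁₅,x₂₃,x₂₄,x₂₅,x₃₄,x₃₅,x₄₅` (indexed `0,…,9`). -/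
def plucker16 : Fin 5 → MvPolynomial (Fin 10) R16 :=
  ![X 4 * X 9 - X 5 * X 8 + X 6 * X 7,
    X 1 * X 9 - X 2 * X 8 + X 3 * X 7,
    X 0 * X 9 - X 2 * X 6 + X 3 * X 5,
    X 0 * X 8 - X 1 * X 6 + X 3 * X 4,
    X 0 * X 7 - X 1 * X 5 + X 2 * X 4]

/-- The point with `x₁₂ = t₉`, `x₁₃ = −t₆` and all other coordinates zero. -/
def pt16 : Fin 10 → R16 :=
  ![X 8, -(X 5), 0, 0, 0, 0, 0, 0, 0, 0]

lemma pt16_0 : pt16 0 = X 8 := rfl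
lemma pt16_1 : pt16 1 = -(X 5) := rfl
lemma pt16_2 : pt16 2 = 0 := rfl
lemma pt16_3 : pt16 3 = 0 := rfl
lemma pt16_4 : pt16 4 = 0 := rfl
lemma pt16_5 : pt16 5 = 0 := rfl
lemma pt16_6 : pt16 6 = 0 := rfl
lemma pt16_7 : pt16 7 = 0 := rfl
lemma pt16_8 : pt16 8 = 0 := rfl
lemma pt16_9 : pt16 9 = 0 := rfl

set_option maxHeartbeats 1000000 in
/-- At the point `x₁₂ = t₉`, `x₁₃ = −t₆` (all other coordinates `0`), the quadric `Q`
of family (2) for `p = 5` vanishes, all five Plücker quadrics vanish, and all ten partial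
derivatives of `Q` vanish: this point is a singular point of `Gr(2,5) ∩ {Q = 0}`. -/
theorem family2_p5_singular_point :
    eval pt16 Q16 = 0 ∧
    (∀ j : Fin 5, eval pt16 (plucker16 j) = 0) ∧
    (∀ i : Fin 10, eval pt16 (pderiv i Q16) = 0) := by
  refine ⟨?_, ?_, ?_⟩
  · simp [Q16, T16, pt16_0, pt16_1, pt16_2, pt16_3, pt16_4, pt16_5, pt16_6, pt16_7, pt16_8, pt16_9] <;> ring
  · intro j
    fin_cases j <;>
      simp [plucker16, pt16_0, pt16_1, pt16_2, pt16_3, pt16_4, pt16_5, pt16_6, pt16_7, pt16_8, pt16_9] <;> ring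
  · intro i
    fin_cases i <;>
      simp [Q16, T16, pderiv_mul, pderiv_X, Pi.single_apply, pt16_0, pt16_1, pt16_2, pt16_3, pt16_4, pt16_5, pt16_6, pt16_7, pt16_8, pt16_9] <;> ring
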